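/- Define A₋ = D_{p,q} and A₊ = η_p + x η_{p^{-1}} p^{N} - (p-q) x D_{p,q} acting on the basis ψ_n(x;p,q), where η_s f(x) = f(sx) and p^N ψ_n = p^n ψ_n. Then A₊ A₋ ψ_n = [n]_{p,q} ψ_n and A₋ A₊ ψ_n = [n+1]_{p,q} ψ_n, hence A₋ A₊ - q A₊ A₋ acts as p^n on ψ_n (the (p,q)-oscillator relation). -/

import Mathlib

/-- The (p,q)-number `[n]_{p,q} = (p^n - q^n)/(p-q)`. -/
noncomputable def pqNum (p q : ℝ) (n : ℕ) : ℝ := (p ^ n - q ^ n) / (p - q)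

/-- The (p,q)-factorial `[n]_{p,q}!`. -/
noncomputable def pqFac (p q : ℝ) (n : ℕ) : ℝ := ∏ j ∈ Finset.range n, pqNum p q (j + 1)

/-- The (p,q)-binomial coefficient. -/
noncomputable def pqBinom (p q : ℝ) (n k : ℕ) : ℝ :=
  pqFac p q n / (pqFac p q k * pqFac p q (n - k))

/-- The (p,q)-Rogers-Szegő polynomial `H_n(x;p,q)`. -/
noncomputable def pqRogersSzego (p q : ℝ) (n : ℕ) (x : ℝ) : ℝ :=
  ∑ k ∈ Finset.range (n + 1), pqBinom p q n k * x ^ k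

/-- The normalized (p,q)-Rogers-Szegő polynomial `ψ_n(x;p,q)`. -/
noncomputable def psiPQ (p q : ℝ) (n : ℕ) (x : ℝ) : ℝ :=
  pqRogersSzego p q n x / Real.sqrt (pqFac p q n)

/-- The (p,q)-difference operator; the annihilation operator `A₋`. -/
noncomputable def Dpq (p q : ℝ) (f : ℝ → ℝ) (x : ℝ) : ℝ :=
  (f (p * x) - f (q * x)) / ((p - q) * x)

/-- The creation operator `A₊ = η_p + x η_{p⁻¹} p^N - (p-q) x D_{p,q}` acting on a
`p^N`-eigenfunction with eigenvalue `p^m` (scaling operator `η_s f(x) = f(sx)`). -/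
noncomputable def Aplus (p q : ℝ) (m : ℕ) (f : ℝ → ℝ) (x : ℝ) : ℝ :=
  f (p * x) + x * p ^ m * f (p⁻¹ * x) - (p - q) * x * Dpq p q f x

section Aux

variable {p q : ℝ}

lemma pqNum_pos (hq0 : 0 < q) (hqp : q < p) (n : ℕ) : 0 < pqNum p q (n + 1) :=
  div_pos (sub_pos.2 (pow_lt_pow_left₀ hqp hq0.le (Nat.succ_ne_zero n)))
    (sub_pos.2 hqp)

lemma pqFac_pos (hq0 : 0 < q) (hqp : q < p) (n : ℕ) : 0 < pqFac p q n :=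
  Finset.prod_pos fun j _ => pqNum_pos hq0 hqp j

lemma pqFac_succ (p q : ℝ) (n : ℕ) :
    pqFac p q (n + 1) = pqFac p q n * pqNum p q (n + 1) :=
  Finset.prod_range_succ _ _

lemma pqFac_zero (p q : ℝ) : pqFac p q 0 = 1 := Finset.prod_range_zero _

lemma pqBinom_zero (hq0 : 0 < q) (hqp : q < p) (n : ℕ) : pqBinom p q n 0 = 1 := by
  have := (pqFac_pos hq0 hqp n).ne'
  simp [pqBinom, pqFac_zero, this]

lemma pqBinom_self (hq0 : 0 < q) (hqp : q < p) (n : ℕ) : pqBinom p q n n = 1 := by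
  have := (pqFac_pos hq0 hqp n).ne'
  simp [pqBinom, pqFac_zero, this]

lemma pqNum_mul_binom (hq0 : 0 < q) (hqp : q < p) (m k : ℕ) (hk : k ≤ m) :
    pqBinom p q (m + 1) (k + 1) * pqNum p q (k + 1) =
      pqNum p q (m + 1) * pqBinom p q m k := by
  have h1 : m + 1 - (k + 1) = m - k := by omega
  unfold pqBinom
  rw [h1, pqFac_succ, pqFac_succ]
  have fk := (pqFac_pos hq0 hqp k).ne'
  have fm := (pqFac_pos hq0 hqp m).ne'
  have fmk := (pqFac_pos hq0 hqp (m - k)).ne'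
  have nk := (pqNum_pos hq0 hqp k).ne'
  have nm := (pqNum_pos hq0 hqp m).ne'
  field_simp

lemma pqNum_pascal (hqp : q < p) {j n : ℕ} (hj : j < n) :
    pqNum p q (n + 1) = q ^ (j + 1) * pqNum p q (n - j)
      + p ^ (n - j) * pqNum p q (j + 1) := by
  obtain ⟨d, rfl⟩ : ∃ d, n = j + 1 + d := ⟨n - (j + 1), by omega⟩
  have h : j + 1 + d - j = d + 1 := by omega
  rw [h]
  unfold pqNum
  have hpq : p - q ≠ 0 := sub_ne_zero.2 hqp.ne'
  field_simp
  ring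

lemma pqBinom_pascal (hq0 : 0 < q) (hqp : q < p) {j n : ℕ} (hj : j < n) :
    pqBinom p q (n + 1) (j + 1) =
      q ^ (j + 1) * pqBinom p q n (j + 1) + p ^ (n - j) * pqBinom p q n j := by
  obtain ⟨e, rfl⟩ : ∃ e, n = j + 1 + e := ⟨n - (j + 1), by omega⟩
  have h1 : j + 1 + e + 1 - (j + 1) = e + 1 := by omega
  have h2 : j + 1 + e - (j + 1) = e := by omega
  have h3 : j + 1 + e - j = e + 1 := by omega
  have hpascal : pqNum p q (j + 1 + e + 1) =
      q ^ (j + 1) * pqNum p q (e + 1) + p ^ (e + 1) * pqNum p q (j + 1) := by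
    unfold pqNum
    have hpq : p - q ≠ 0 := sub_ne_zero.2 hqp.ne'
    field_simp
    ring
  unfold pqBinom
  rw [h1, h2, h3, pqFac_succ p q (j + 1 + e), pqFac_succ p q e, pqFac_succ p q j,
    hpascal]
  have fj := (pqFac_pos hq0 hqp j).ne'
  have fe := (pqFac_pos hq0 hqp e).ne'
  have fje := (pqFac_pos hq0 hqp (j + 1 + e)).ne'
  have nj := (pqNum_pos hq0 hqp j).ne'
  have ne' := (pqNum_pos hq0 hqp e).ne'
  field_simp

/-- `D_{p,q} H_n = [n]_{p,q} H_{n-1}`. -/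
lemma Dpq_H (hq0 : 0 < q) (hqp : q < p) (n : ℕ) {x : ℝ} (hx : x ≠ 0) :
    Dpq p q (pqRogersSzego p q n) x = pqNum p q n * pqRogersSzego p q (n - 1) x := by
  have hpq : p - q ≠ 0 := sub_ne_zero.2 hqp.ne'
  cases n with
  | zero =>
      simp [Dpq, pqRogersSzego, pqNum]
  | succ m =>
      unfold Dpq
      have key : pqRogersSzego p q (m + 1) (p * x) - pqRogersSzego p q (m + 1) (q * x)
          = (p - q) * x * (pqNum p q (m + 1) * pqRogersSzego p q m x) := by
        unfold pqRogersSzego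
        rw [← Finset.sum_sub_distrib, Finset.sum_range_succ']
        have h0 : pqBinom p q (m + 1) 0 * (p * x) ^ 0
            - pqBinom p q (m + 1) 0 * (q * x) ^ 0 = 0 := by ring
        rw [h0, add_zero, Finset.mul_sum, Finset.mul_sum]
        refine Finset.sum_congr rfl fun j hj => ?_
        have hjm : j ≤ m := Nat.lt_succ_iff.mp (Finset.mem_range.mp hj)
        have hb := pqNum_mul_binom hq0 hqp m j hjm
        have hnum : (p - q) * pqNum p q (j + 1) = p ^ (j + 1) - q ^ (j + 1) := by
          unfold pqNum; field_simp
        calc pqBinom p q (m + 1) (j + 1) * (p * x) ^ (j + 1)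
              - pqBinom p q (m + 1) (j + 1) * (q * x) ^ (j + 1)
            = pqBinom p q (m + 1) (j + 1) * (p ^ (j + 1) - q ^ (j + 1)) * x ^ (j + 1) := by
              rw [mul_pow, mul_pow]; ring
          _ = pqBinom p q (m + 1) (j + 1) * ((p - q) * pqNum p q (j + 1)) * x ^ (j + 1) := by
              rw [hnum]
          _ = (p - q) * (pqBinom p q (m + 1) (j + 1) * pqNum p q (j + 1)) * x ^ (j + 1) := by
              ring
          _ = (p - q) * x * (pqNum p q (m + 1) * (pqBinom p q m j * x ^ j)) := by
              rw [hb]; ring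
      rw [key, mul_comm ((p - q) * x) (pqNum p q (m + 1) * pqRogersSzego p q m x),
        mul_div_assoc, div_self (mul_ne_zero hpq hx), mul_one]
      simp

/-- `A₊ H_n = H_{n+1}` (with eigenvalue exponent `n`). -/
lemma Aplus_H (hq0 : 0 < q) (hqp : q < p) (n : ℕ) {x : ℝ} (hx : x ≠ 0) :
    Aplus p q n (pqRogersSzego p q n) x = pqRogersSzego p q (n + 1) x := by
  have hp0 : (0:ℝ) < p := hq0.trans hqp
  have hp : p ≠ 0 := hp0.ne'
  have hpq : p - q ≠ 0 := sub_ne_zero.2 hqp.ne'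
  unfold Aplus Dpq
  rw [mul_div_cancel₀ _ (mul_ne_zero hpq hx)]
  have lhs_eq : pqRogersSzego p q n (p * x)
      + x * p ^ n * pqRogersSzego p q n (p⁻¹ * x)
      - (pqRogersSzego p q n (p * x) - pqRogersSzego p q n (q * x))
      = pqRogersSzego p q n (q * x) + x * p ^ n * pqRogersSzego p q n (p⁻¹ * x) := by
    ring
  rw [lhs_eq]
  unfold pqRogersSzego
  -- RHS: peel off the k = 0 term, then the top term
  rw [Finset.sum_range_succ' (fun k => pqBinom p q (n + 1) k * x ^ k) (n + 1)]
  rw [Finset.sum_range_succ (fun j => pqBinom p q (n + 1) (j + 1) * x ^ (j + 1)) n]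
  -- LHS first sum: peel off the k = 0 term
  rw [Finset.sum_range_succ' (fun k => pqBinom p q n k * (q * x) ^ k) n]
  -- LHS second sum: peel off the top term
  rw [Finset.mul_sum, Finset.sum_range_succ
    (fun k => x * p ^ n * (pqBinom p q n k * (p⁻¹ * x) ^ k)) n]
  have hb0 : pqBinom p q n 0 = 1 := pqBinom_zero hq0 hqp n
  have hbn : pqBinom p q n n = 1 := pqBinom_self hq0 hqp n
  have hb0' : pqBinom p q (n + 1) 0 = 1 := pqBinom_zero hq0 hqp (n + 1)
  have hbn' : pqBinom p q (n + 1) (n + 1) = 1 := pqBinom_self hq0 hqp (n + 1)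
  have htop : x * p ^ n * (pqBinom p q n n * (p⁻¹ * x) ^ n)
      = pqBinom p q (n + 1) (n + 1) * x ^ (n + 1) := by
    rw [hbn, hbn', mul_pow, inv_pow, one_mul, one_mul]
    field_simp
    ring
  have hsum : (∑ j ∈ Finset.range n, pqBinom p q n (j + 1) * (q * x) ^ (j + 1))
      + (∑ j ∈ Finset.range n, x * p ^ n * (pqBinom p q n j * (p⁻¹ * x) ^ j))
      = ∑ j ∈ Finset.range n, pqBinom p q (n + 1) (j + 1) * x ^ (j + 1) := by
    rw [← Finset.sum_add_distrib]
    refine Finset.sum_congr rfl fun j hj => ?_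
    have hjn : j < n := Finset.mem_range.mp hj
    rw [pqBinom_pascal hq0 hqp hjn]
    have hpow : p ^ n * (p⁻¹) ^ j = p ^ (n - j) := by
      rw [inv_pow, pow_sub₀ p hp hjn.le]
      
    rw [mul_pow, mul_pow (p⁻¹) x j]
    calc pqBinom p q n (j + 1) * (q ^ (j + 1) * x ^ (j + 1))
          + x * p ^ n * (pqBinom p q n j * ((p⁻¹) ^ j * x ^ j))
        = q ^ (j + 1) * pqBinom p q n (j + 1) * x ^ (j + 1)
          + (p ^ n * (p⁻¹) ^ j) * pqBinom p q n j * (x * x ^ j) := by ring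
      _ = q ^ (j + 1) * pqBinom p q n (j + 1) * x ^ (j + 1)
          + p ^ (n - j) * pqBinom p q n j * x ^ (j + 1) := by
          rw [hpow, ← pow_succ']
      _ = (q ^ (j + 1) * pqBinom p q n (j + 1) + p ^ (n - j) * pqBinom p q n j)
          * x ^ (j + 1) := by ring
  rw [hb0, hb0']
  calc (∑ j ∈ Finset.range n, pqBinom p q n (j + 1) * (q * x) ^ (j + 1)) + 1 * (q * x) ^ 0
      + ((∑ j ∈ Finset.range n, x * p ^ n * (pqBinom p q n j * (p⁻¹ * x) ^ j))
        + x * p ^ n * (pqBinom p q n n * (p⁻¹ * x) ^ n))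
      = ((∑ j ∈ Finset.range n, pqBinom p q n (j + 1) * (q * x) ^ (j + 1))
        + (∑ j ∈ Finset.range n, x * p ^ n * (pqBinom p q n j * (p⁻¹ * x) ^ j)))
        + x * p ^ n * (pqBinom p q n n * (p⁻¹ * x) ^ n) + 1 := by ring
    _ = (∑ j ∈ Finset.range n, pqBinom p q (n + 1) (j + 1) * x ^ (j + 1))
        + pqBinom p q (n + 1) (n + 1) * x ^ (n + 1) + 1 * x ^ 0 := by
        rw [hsum, htop]; ring

lemma Dpq_congr {f g : ℝ → ℝ} (hp : p ≠ 0) (hq : q ≠ 0)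
    (h : ∀ y : ℝ, y ≠ 0 → f y = g y) {x : ℝ} (hx : x ≠ 0) :
    Dpq p q f x = Dpq p q g x := by
  unfold Dpq
  rw [h _ (mul_ne_zero hp hx), h _ (mul_ne_zero hq hx)]

lemma Aplus_congr {f g : ℝ → ℝ} (m : ℕ) (hp : p ≠ 0) (hq : q ≠ 0)
    (h : ∀ y : ℝ, y ≠ 0 → f y = g y) {x : ℝ} (hx : x ≠ 0) :
    Aplus p q m f x = Aplus p q m g x := by
  unfold Aplus Dpq
  rw [h _ (mul_ne_zero hp hx), h _ (mul_ne_zero hq hx),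
    h _ (mul_ne_zero (inv_ne_zero hp) hx)]

lemma Aplus_mul (m : ℕ) (c : ℝ) (f : ℝ → ℝ) (x : ℝ) :
    Aplus p q m (fun y => c * f y) x = c * Aplus p q m f x := by
  unfold Aplus Dpq
  ring

lemma Dpq_div (f : ℝ → ℝ) (s x : ℝ) :
    Dpq p q (fun y => f y / s) x = Dpq p q f x / s := by
  unfold Dpq
  ring

end Aux

/-- The (p,q)-oscillator relations on the basis `ψ_n(x;p,q)`:
`A₊A₋ψ_n = [n]_{p,q} ψ_n`, `A₋A₊ψ_n = [n+1]_{p,q} ψ_n`, hence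
`(A₋A₊ - q A₊A₋) ψ_n = p^n ψ_n`.  (Since `A₋ψ_n ∝ ψ_{n-1}`, the operator `p^N`
in `A₊` contributes `p^{n-1}` in the first relation and `p^n` in the second.) -/
theorem pq_oscillator_relations (p q : ℝ) (hq0 : 0 < q) (hqp : q < p) (n : ℕ)
    (x : ℝ) (hx : x ≠ 0) :
    Aplus p q (n - 1) (Dpq p q (psiPQ p q n)) x = pqNum p q n * psiPQ p q n x ∧
      Dpq p q (Aplus p q n (psiPQ p q n)) x = pqNum p q (n + 1) * psiPQ p q n x ∧
      Dpq p q (Aplus p q n (psiPQ p q n)) x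
          - q * Aplus p q (n - 1) (Dpq p q (psiPQ p q n)) x = p ^ n * psiPQ p q n x := by
  have hp0 : (0:ℝ) < p := hq0.trans hqp
  have hp : p ≠ 0 := hp0.ne'
  have hq : q ≠ 0 := hq0.ne'
  have hpq : p - q ≠ 0 := sub_ne_zero.2 hqp.ne'
  set s := Real.sqrt (pqFac p q n) with hs
  have hDpsi : ∀ y : ℝ, y ≠ 0 →
      Dpq p q (psiPQ p q n) y = (pqNum p q n / s) * pqRogersSzego p q (n - 1) y := by
    intro y hy
    have h1 : Dpq p q (psiPQ p q n) y = Dpq p q (pqRogersSzego p q n) y / s := by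
      unfold Dpq psiPQ
      ring
    rw [h1, Dpq_H hq0 hqp n hy]
    ring
  have h1 : Aplus p q (n - 1) (Dpq p q (psiPQ p q n)) x = pqNum p q n * psiPQ p q n x := by
    rw [Aplus_congr (n - 1) hp hq hDpsi hx, Aplus_mul]
    cases n with
    | zero =>
        have : pqNum p q 0 = 0 := by simp [pqNum]
        rw [this]
        ring
    | succ m =>
        have hm : m + 1 - 1 = m := rfl
        rw [hm, Aplus_H hq0 hqp m hx]
        unfold psiPQ
        ring
  have hApsi : ∀ y : ℝ, y ≠ 0 →
      Aplus p q n (psiPQ p q n) y = pqRogersSzego p q (n + 1) y / s := by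
    intro y hy
    have h2 : Aplus p q n (psiPQ p q n) y
        = Aplus p q n (pqRogersSzego p q n) y / s := by
      unfold Aplus Dpq psiPQ
      ring
    rw [h2, Aplus_H hq0 hqp n hy]
  have h2 : Dpq p q (Aplus p q n (psiPQ p q n)) x = pqNum p q (n + 1) * psiPQ p q n x := by
    rw [Dpq_congr hp hq hApsi hx, Dpq_div, Dpq_H hq0 hqp (n + 1) hx]
    have : n + 1 - 1 = n := rfl
    rw [this]
    unfold psiPQ
    ring
  refine ⟨h1, h2, ?_⟩
  have hkey : pqNum p q (n + 1) - q * pqNum p q n = p ^ n := by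
    unfold pqNum
    field_simp
    ring
  rw [h1, h2]
  linear_combination psiPQ p q n x * hkey
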